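/- (Lemma 2(ii)-4) If Φ is a maximal consistent set of formulas of propositional Łukasiewicz logic, then for every formula φ there exists a positive integer n such that either the n-fold strong conjunction φ & ⋯ & φ (n times) belongs to Φ, or its negation ¬(φ & ⋯ & φ) (n times) belongs to Φ. -/

import Mathlib

/-- Formulas of propositional Łukasiewicz logic: propositional variables,
the constant `⊥`, strong conjunction `&` and implication `→`. -/
inductive LFormula : Type
  | var : ℕ → LFormula
  | bot : LFormula
  | conj : LFormula → LFormula → LFormula
  | impl : LFormula → LFormula → LFormula

namespace LFormula

/-- Negation is the abbreviation `¬φ := φ → ⊥`. -/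
def neg (φ : LFormula) : LFormula := impl φ bot

end LFormula

/-- Hilbert-style provability for Łukasiewicz logic `Ł` from a set of premises:
modus ponens together with the axiom schemes (A1)–(A7) and double negation. -/
inductive LProof : Set LFormula → LFormula → Prop
  | prem {Γ : Set LFormula} {φ : LFormula} : φ ∈ Γ → LProof Γ φ
  | a1 {Γ : Set LFormula} (φ ψ χ : LFormula) :
      LProof Γ ((φ.impl ψ).impl ((ψ.impl χ).impl (φ.impl χ)))
  | a2 {Γ : Set LFormula} (φ ψ : LFormula) : LProof Γ ((φ.conj ψ).impl φ)
  | a3 {Γ : Set LFormula} (φ ψ : LFormula) : LProof Γ ((φ.conj ψ).impl (ψ.conj φ))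
  | a4 {Γ : Set LFormula} (φ ψ : LFormula) :
      LProof Γ ((φ.conj (φ.impl ψ)).impl (ψ.conj (ψ.impl φ)))
  | a5a {Γ : Set LFormula} (φ ψ χ : LFormula) :
      LProof Γ ((φ.impl (ψ.impl χ)).impl ((φ.conj ψ).impl χ))
  | a5b {Γ : Set LFormula} (φ ψ χ : LFormula) :
      LProof Γ (((φ.conj ψ).impl χ).impl (φ.impl (ψ.impl χ)))
  | a6 {Γ : Set LFormula} (φ ψ χ : LFormula) :
      LProof Γ (((φ.impl ψ).impl χ).impl (((ψ.impl φ).impl χ).impl χ))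
  | a7 {Γ : Set LFormula} (φ : LFormula) : LProof Γ (LFormula.bot.impl φ)
  | dn {Γ : Set LFormula} (φ : LFormula) : LProof Γ (φ.neg.neg.impl φ)
  | mp {Γ : Set LFormula} {φ ψ : LFormula} :
      LProof Γ (φ.impl ψ) → LProof Γ φ → LProof Γ ψ

/-- `listConj φ [ψ₁, …, ψₙ]` is the strong conjunction `φ & ψ₁ & ⋯ & ψₙ`. -/
def listConj : LFormula → List LFormula → LFormula
  | φ, [] => φ
  | φ, ψ :: l => LFormula.conj φ (listConj ψ l)

/-- A set `Γ` is consistent if for every finite nonempty collection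
`φ, ψ₁, …, ψₙ` of its members, `⊬ ¬(φ & ψ₁ & ⋯ & ψₙ)`. -/
def Consistent (Γ : Set LFormula) : Prop :=
  ∀ (φ : LFormula) (l : List LFormula), φ ∈ Γ → (∀ ψ ∈ l, ψ ∈ Γ) →
    ¬ LProof ∅ (listConj φ l).neg

/-- A consistent set `Φ` is maximal if adjoining any formula `ψ ∉ Φ`
yields an inconsistent set. -/
def MaximalConsistent (Φ : Set LFormula) : Prop :=
  Consistent Φ ∧ ∀ ψ : LFormula, ψ ∉ Φ → ¬ Consistent (Φ ∪ {ψ})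

/-- Evaluation of formulas in `[0,1]` determined by the values `π` of the
propositional variables. -/
def eval (π : ℕ → ℝ) : LFormula → ℝ
  | LFormula.var p => π p
  | LFormula.bot => 0
  | LFormula.conj φ ψ => max 0 (eval π φ + eval π ψ - 1)
  | LFormula.impl φ ψ => min 1 (1 - eval π φ + eval π ψ)

/-- A valuation assigns each propositional variable a value in `[0,1]`. -/
def IsValuation (π : ℕ → ℝ) : Prop := ∀ p : ℕ, 0 ≤ π p ∧ π p ≤ 1

/-- `iterConj φ n` is the `(n+1)`-fold strong conjunction `φ & ⋯ & φ`. -/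
def iterConj (φ : LFormula) : ℕ → LFormula
  | 0 => φ
  | n + 1 => φ.conj (iterConj φ n)

section Aux

open LFormula

/-! ### Derived rules of the Hilbert system -/

lemma thm_trans {Γ} {a b c : LFormula} (h1 : LProof Γ (a.impl b))
    (h2 : LProof Γ (b.impl c)) : LProof Γ (a.impl c) :=
  LProof.mp (LProof.mp (LProof.a1 a b c) h1) h2

lemma thm_k {Γ} (a b : LFormula) : LProof Γ (a.impl (b.impl a)) :=
  LProof.mp (LProof.a5b a b a) (LProof.a2 a b)

/-- Exchange as a formula. -/
lemma thm_exchF {Γ} (a b c : LFormula) :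
    LProof Γ ((a.impl (b.impl c)).impl (b.impl (a.impl c))) := by
  have e1 := LProof.a5a (Γ := Γ) a b c
  have e2 : LProof Γ (((a.conj b).impl c).impl ((b.conj a).impl c)) :=
    LProof.mp (LProof.a1 (b.conj a) (a.conj b) c) (LProof.a3 b a)
  have e3 := LProof.a5b (Γ := Γ) b a c
  exact thm_trans (thm_trans e1 e2) e3

lemma thm_exch {Γ} {a b c : LFormula} (h : LProof Γ (a.impl (b.impl c))) :
    LProof Γ (b.impl (a.impl c)) :=
  LProof.mp (thm_exchF a b c) h

lemma thm_id {Γ} (a : LFormula) : LProof Γ (a.impl a) :=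
  LProof.mp (thm_exch (thm_k a ((a.conj a).impl a))) (LProof.a2 a a)

lemma thm_pair {Γ} (a b : LFormula) : LProof Γ (a.impl (b.impl (a.conj b))) :=
  LProof.mp (LProof.a5b a b (a.conj b)) (thm_id _)

lemma thm_conjIntro {Γ} {a b : LFormula} (h1 : LProof Γ a) (h2 : LProof Γ b) :
    LProof Γ (a.conj b) :=
  LProof.mp (LProof.mp (thm_pair a b) h1) h2

lemma thm_mono {Γ} {a a' b b' : LFormula} (h1 : LProof Γ (a.impl a'))
    (h2 : LProof Γ (b.impl b')) : LProof Γ ((a.conj b).impl (a'.conj b')) := by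
  have q := thm_trans h1 (thm_pair a' b')
  have s := thm_trans h2 (thm_exch q)
  exact LProof.mp (LProof.a5a a b (a'.conj b')) (thm_exch s)

lemma thm_curry {Γ} {a b c : LFormula} (h : LProof Γ ((a.conj b).impl c)) :
    LProof Γ (a.impl (b.impl c)) :=
  LProof.mp (LProof.a5b a b c) h

lemma thm_uncurry {Γ} {a b c : LFormula} (h : LProof Γ (a.impl (b.impl c))) :
    LProof Γ ((a.conj b).impl c) :=
  LProof.mp (LProof.a5a a b c) h

lemma thm_assoc1 {Γ} (a b c : LFormula) :
    LProof Γ (((a.conj b).conj c).impl (a.conj (b.conj c))) := by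
  set X := a.conj (b.conj c) with hX
  have g' : LProof Γ ((b.conj c).impl (a.impl X)) :=
    thm_exch (thm_curry (thm_id X))
  have cg' : LProof Γ (b.impl (c.impl (a.impl X))) := thm_curry g'
  have h1 : LProof Γ (b.impl (a.impl (c.impl X))) :=
    thm_trans cg' (thm_exchF c a X)
  exact thm_uncurry (thm_uncurry (thm_exch h1))

lemma thm_assoc2 {Γ} (a b c : LFormula) :
    LProof Γ ((a.conj (b.conj c)).impl ((a.conj b).conj c)) := by
  set X := (a.conj b).conj c with hX
  have h0 : LProof Γ (a.impl (b.impl (c.impl X))) :=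
    thm_curry (thm_curry (thm_id X))
  have h1 : LProof Γ (b.impl (c.impl (a.impl X))) :=
    thm_trans (thm_exch h0) (thm_exchF a c X)
  have h2 : LProof Γ ((b.conj c).impl (a.impl X)) := thm_uncurry h1
  exact thm_uncurry (thm_exch h2)

lemma thm_iterMono {Γ} {a b : LFormula} (h : LProof Γ (a.impl b)) :
    ∀ j, LProof Γ ((iterConj a j).impl (iterConj b j))
  | 0 => h
  | j + 1 => thm_mono h (thm_iterMono h j)

lemma thm_iterSelf {Γ} {a : LFormula} (h : LProof Γ a) :
    ∀ j, LProof Γ (iterConj a j)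
  | 0 => h
  | j + 1 => thm_conjIntro h (thm_iterSelf h j)

/-! ### Boolean soundness (classical two-valued semantics) -/

def bval (π : ℕ → Bool) : LFormula → Bool
  | .var p => π p
  | .bot => false
  | .conj a b => bval π a && bval π b
  | .impl a b => !bval π a || bval π b

lemma bval_sound (π : ℕ → Bool) {φ : LFormula} (h : LProof ∅ φ) :
    bval π φ = true := by
  induction h with
  | prem hm => exact absurd hm (Set.notMem_empty _)
  | a1 a b c =>
      simp only [bval]
      generalize bval π a = x; generalize bval π b = y; generalize bval π c = z
      revert x y z; decide
  | a2 a b =>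
      simp only [bval]
      generalize bval π a = x; generalize bval π b = y
      revert x y; decide
  | a3 a b =>
      simp only [bval]
      generalize bval π a = x; generalize bval π b = y
      revert x y; decide
  | a4 a b =>
      simp only [bval]
      generalize bval π a = x; generalize bval π b = y
      revert x y; decide
  | a5a a b c =>
      simp only [bval]
      generalize bval π a = x; generalize bval π b = y; generalize bval π c = z
      revert x y z; decide
  | a5b a b c =>
      simp only [bval]
      generalize bval π a = x; generalize bval π b = y; generalize bval π c = z
      revert x y z; decide
  | a6 a b c =>
      simp only [bval]
      generalize bval π a = x; generalize bval π b = y; generalize bval π c = z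
      revert x y z; decide
  | a7 a =>
      simp only [bval]
      generalize bval π a = x
      revert x; decide
  | dn a =>
      simp only [LFormula.neg, bval]
      generalize bval π a = x
      revert x; decide
  | mp h1 h2 ih1 ih2 => simp only [bval, ih2] at ih1; simpa using ih1

lemma not_thm_bot : ¬ LProof ∅ LFormula.bot := fun h => by
  simpa [bval] using bval_sound (fun _ => false) h

/-! ### Conjunctions of elements of a set -/

/-- `Good Φ G` : `G` is provably implied by a conjunction of members of `Φ`. -/
def Good (Φ : Set LFormula) (G : LFormula) : Prop :=
  ∃ ψ l, ψ ∈ Φ ∧ (∀ τ ∈ l, τ ∈ Φ) ∧ LProof ∅ ((listConj ψ l).impl G)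

lemma good_of_mem {Φ : Set LFormula} {θ : LFormula} (h : θ ∈ Φ) : Good Φ θ :=
  ⟨θ, [], h, by simp, thm_id θ⟩

lemma listConj_append (χ l2) : ∀ (l) (ψ : LFormula),
    LProof ∅ ((listConj ψ (l ++ χ :: l2)).impl
      ((listConj ψ l).conj (listConj χ l2)))
  | [], ψ => thm_id _
  | a :: l, ψ => by
      have ih := listConj_append χ l2 l a
      have h1 : LProof (∅ : Set LFormula)
          ((listConj ψ ((a :: l) ++ χ :: l2)).impl
            (ψ.conj ((listConj a l).conj (listConj χ l2)))) :=
        thm_mono (thm_id ψ) ih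
      exact thm_trans h1 (thm_assoc2 ψ (listConj a l) (listConj χ l2))

lemma good_conj {Φ : Set LFormula} {G H : LFormula} (hG : Good Φ G)
    (hH : Good Φ H) : Good Φ (G.conj H) := by
  obtain ⟨ψ, l, hψ, hl, hpf⟩ := hG
  obtain ⟨χ, l2, hχ, hl2, hpf2⟩ := hH
  refine ⟨ψ, l ++ χ :: l2, hψ, ?_, ?_⟩
  · intro τ hτ
    rcases List.mem_append.mp hτ with h | h
    · exact hl τ h
    · rcases List.mem_cons.mp h with rfl | h
      · exact hχ
      · exact hl2 τ h
  · exact thm_trans (listConj_append χ l2 l ψ) (thm_mono hpf hpf2)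

lemma good_iter {Φ : Set LFormula} {G : LFormula} (hG : Good Φ G) :
    ∀ j, Good Φ (iterConj G j)
  | 0 => hG
  | j + 1 => good_conj hG (good_iter hG j)

lemma good_bad {Φ : Set LFormula} (hc : Consistent Φ) {G : LFormula}
    (hG : Good Φ G) (hneg : LProof ∅ G.neg) : False := by
  obtain ⟨ψ, l, hψ, hl, hpf⟩ := hG
  exact hc ψ l hψ hl (thm_trans hpf hneg)

/-- Extract a witness from an inconsistent set. -/
lemma of_not_consistent {Γ : Set LFormula} (h : ¬ Consistent Γ) :
    ∃ χ l, χ ∈ Γ ∧ (∀ ψ ∈ l, ψ ∈ Γ) ∧ LProof ∅ (listConj χ l).neg := by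
  unfold Consistent at h
  push_neg at h
  exact h

/-- The key splitting lemma: any conjunction of formulas from `Φ ∪ {φ0}` is
implied by one of the canonical forms. -/
lemma split (Φ : Set LFormula) (φ0 : LFormula) :
    ∀ (l : List LFormula) (χ : LFormula), (χ ∈ Φ ∨ χ = φ0) →
    (∀ ψ ∈ l, ψ ∈ Φ ∨ ψ = φ0) →
    (∃ m, LProof ∅ ((iterConj φ0 m).impl (listConj χ l))) ∨
    (∃ G m, Good Φ G ∧
      LProof ∅ ((G.conj (iterConj φ0 m)).impl (listConj χ l))) ∨
    (∃ G, Good Φ G ∧ LProof ∅ (G.impl (listConj χ l)))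
  | [], χ, hχ, _ => by
      rcases hχ with h | rfl
      · exact Or.inr (Or.inr ⟨χ, good_of_mem h, thm_id χ⟩)
      · exact Or.inl ⟨0, thm_id χ⟩
  | τ :: l, χ, hχ, hl => by
      have ih := split Φ φ0 l τ (hl τ (List.mem_cons_self (a := τ) (l := l)))
        (fun ψ hψ => hl ψ (List.mem_cons_of_mem τ hψ))
      have hgoal : listConj χ (τ :: l) = χ.conj (listConj τ l) := rfl
      rw [hgoal]
      set L := listConj τ l with hL
      rcases hχ with hmem | rfl
      · rcases ih with ⟨m, hm⟩ | ⟨G, m, hG, hm⟩ | ⟨G, hG, hm⟩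
        · exact Or.inr (Or.inl ⟨χ, m, good_of_mem hmem,
            thm_mono (thm_id χ) hm⟩)
        · refine Or.inr (Or.inl ⟨χ.conj G, m, good_conj (good_of_mem hmem) hG,
            ?_⟩)
          exact thm_trans (thm_assoc1 χ G (iterConj φ0 m))
            (thm_mono (thm_id χ) hm)
        · exact Or.inr (Or.inr ⟨χ.conj G, good_conj (good_of_mem hmem) hG,
            thm_mono (thm_id χ) hm⟩)
      · rcases ih with ⟨m, hm⟩ | ⟨G, m, hG, hm⟩ | ⟨G, hG, hm⟩
        · exact Or.inl ⟨m + 1, thm_mono (thm_id χ) hm⟩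
        · -- G ⊙ (χ ⊙ φ0^m) → χ ⊙ (G ⊙ φ0^m) → χ ⊙ L
          refine Or.inr (Or.inl ⟨G, m + 1, hG, ?_⟩)
          have e1 : LProof (∅ : Set LFormula)
              ((G.conj (iterConj χ (m+1))).impl
                ((G.conj χ).conj (iterConj χ m))) :=
            thm_assoc2 G χ (iterConj χ m)
          have e2 : LProof (∅ : Set LFormula)
              (((G.conj χ).conj (iterConj χ m)).impl
                ((χ.conj G).conj (iterConj χ m))) :=
            thm_mono (LProof.a3 G χ) (thm_id _)
          have e3 : LProof (∅ : Set LFormula)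
              (((χ.conj G).conj (iterConj χ m)).impl
                (χ.conj (G.conj (iterConj χ m)))) :=
            thm_assoc1 χ G (iterConj χ m)
          exact thm_trans (thm_trans (thm_trans e1 e2) e3)
            (thm_mono (thm_id χ) hm)
        · refine Or.inr (Or.inl ⟨G, 0, hG, ?_⟩)
          exact thm_trans (LProof.a3 G χ) (thm_mono (thm_id χ) hm)

/-- Theorems belong to every maximal consistent set. -/
lemma thm_mem {Φ : Set LFormula} (h : MaximalConsistent Φ) {τ : LFormula}
    (ht : LProof ∅ τ) : τ ∈ Φ := by
  by_contra hτ
  obtain ⟨χ, l, hχ, hl, hneg⟩ := of_not_consistent (h.2 τ hτ)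
  have hclass : ∀ ψ, ψ ∈ Φ ∪ {τ} → ψ ∈ Φ ∨ ψ = τ := by
    intro ψ hψ
    exact Or.symm (by simpa [Set.mem_union, Set.mem_singleton_iff] using hψ)
  rcases split Φ τ l χ (hclass χ hχ) (fun ψ hψ => hclass ψ (hl ψ hψ)) with
    ⟨m, hm⟩ | ⟨G, m, hG, hm⟩ | ⟨G, hG, hm⟩
  · exact not_thm_bot (LProof.mp (thm_trans hm hneg) (thm_iterSelf ht m))
  · have hGm : LProof (∅ : Set LFormula)
        (G.impl (G.conj (iterConj τ m))) :=
      LProof.mp (thm_exch (thm_pair G (iterConj τ m))) (thm_iterSelf ht m)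
    exact good_bad h.1 hG (thm_trans hGm (thm_trans hm hneg))
  · exact good_bad h.1 hG (thm_trans hm hneg)

end Aux

/-- (Lemma 2(ii)-4) For every formula `φ` there is a positive number of copies
`n` such that the `n`-fold conjunction `φ & ⋯ & φ` or its negation is in `Φ`. -/
theorem maximal_iter_conj_or_neg (Φ : Set LFormula) (h : MaximalConsistent Φ)
    (φ : LFormula) :
    ∃ n : ℕ, iterConj φ n ∈ Φ ∨ (iterConj φ n).neg ∈ Φ := by
  by_contra hn
  push_neg at hn
  have hφ : φ ∉ Φ := (hn 0).1
  obtain ⟨χ, l, hχ, hl, hneg⟩ := of_not_consistent (h.2 φ hφ)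
  have hclass : ∀ ψ, ψ ∈ Φ ∪ {φ} → ψ ∈ Φ ∨ ψ = φ := by
    intro ψ hψ
    exact Or.symm (by simpa [Set.mem_union, Set.mem_singleton_iff] using hψ)
  rcases split Φ φ l χ (hclass χ hχ) (fun ψ hψ => hclass ψ (hl ψ hψ)) with
    ⟨m, hm⟩ | ⟨G, m, hG, hm⟩ | ⟨G, hG, hm⟩
  · -- `⊢ ¬(φ^(m+1))`, so the negation is a theorem, hence in `Φ`
    exact (hn m).2 (thm_mem h (thm_trans hm hneg))
  · -- `⊢ ¬(G ⊙ φ^(m+1))` with `G` a `Φ`-conjunction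
    set c := iterConj φ m with hc
    have hGc : LProof (∅ : Set LFormula) (G.impl c.neg) :=
      thm_curry (thm_trans hm hneg)
    have hcneg : c.neg ∉ Φ := (hn m).2
    obtain ⟨χ', l', hχ', hl', hneg'⟩ := of_not_consistent (h.2 c.neg hcneg)
    have hclass' : ∀ ψ, ψ ∈ Φ ∪ {c.neg} → ψ ∈ Φ ∨ ψ = c.neg := by
      intro ψ hψ
      exact Or.symm (by simpa [Set.mem_union, Set.mem_singleton_iff] using hψ)
    rcases split Φ c.neg l' χ' (hclass' χ' hχ')
      (fun ψ hψ => hclass' ψ (hl' ψ hψ)) with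
      ⟨j, hj⟩ | ⟨G', j, hG', hj⟩ | ⟨G', hG', hj⟩
    · exact good_bad h.1 (good_iter hG j)
        (thm_trans (thm_iterMono hGc j) (thm_trans hj hneg'))
    · refine good_bad h.1 (good_conj hG' (good_iter hG j)) ?_
      exact thm_trans (thm_mono (thm_id G') (thm_iterMono hGc j))
        (thm_trans hj hneg')
    · exact good_bad h.1 hG' (thm_trans hj hneg')
  · exact good_bad h.1 hG (thm_trans hm hneg)
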